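/- Let μ ∈ ℂ with μ ∉ ℤ (i.e., μ ≠ n for every integer n). Then there do not exist polynomials p, q ∈ ℂ[X] with p ≠ 0 and q ≠ 0 such that for every z ∈ ℂ with z ≠ 0 and q(z) ≠ 0, the function w ↦ p(w)/q(w) is differentiable at z with z·(p/q)'(z) = μ·(p(z)/q(z)). Equivalently, the equation x·f' = μ·f has no nonzero rational solution f ∈ ℂ(x) when μ ∉ ℤ (the solutions are constant multiples of x^μ, which is not rational). -/

import Mathlib

open Polynomial

theorem xpow_mu_not_rational (μ : ℂ) (hμ : ∀ n : ℤ, (n : ℂ) ≠ μ) :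
    ¬ ∃ p q : Polynomial ℂ, p ≠ 0 ∧ q ≠ 0 ∧
      ∀ z : ℂ, z ≠ 0 → q.eval z ≠ 0 →
        ∃ d : ℂ, HasDerivAt (fun w : ℂ => p.eval w / q.eval w) d z ∧
          z * d = μ * (p.eval z / q.eval z) := by
  rintro ⟨p, q, hp, hq, h⟩
  have key : ∀ z : ℂ, z ≠ 0 → q.eval z ≠ 0 →
      z * ((derivative p).eval z * q.eval z - p.eval z * (derivative q).eval z)
        = μ * (p.eval z * q.eval z) := by
    intro z hz hqz
    obtain ⟨d, hd, heq⟩ := h z hz hqz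
    have hd0 : HasDerivAt (fun w : ℂ => p.eval w / q.eval w)
        (((derivative p).eval z * q.eval z - p.eval z * (derivative q).eval z) / q.eval z ^ 2) z :=
      (p.hasDerivAt z).div (q.hasDerivAt z) hqz
    have hdd : d = ((derivative p).eval z * q.eval z - p.eval z * (derivative q).eval z) / q.eval z ^ 2 :=
      hd.unique hd0
    rw [hdd] at heq
    field_simp at heq
    refine mul_right_cancel₀ hqz ?_
    linear_combination (q.eval z) * heq
  -- polynomial identity
  have hF : X * (derivative p * q - p * derivative q) = C μ * (p * q) := by
    rw [← sub_eq_zero]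
    apply Polynomial.eq_zero_of_infinite_isRoot
    apply Set.Infinite.mono (s := {z : ℂ | (X * q).IsRoot z}ᶜ)
    · intro z hz
      simp only [Set.mem_compl_iff, Set.mem_setOf_eq, IsRoot, eval_mul, eval_X,
        mul_eq_zero, not_or] at hz
      have := key z hz.1 hz.2
      simp only [Set.mem_setOf_eq, IsRoot, eval_sub, eval_mul, eval_X, eval_C]
      linear_combination this
    · exact Set.Finite.infinite_compl
        (Polynomial.finite_setOf_isRoot (mul_ne_zero X_ne_zero hq))
  -- compare coefficients at degree m + n
  have ha : p.coeff p.natDegree ≠ 0 := leadingCoeff_ne_zero.mpr hp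
  have hb : q.coeff q.natDegree ≠ 0 := leadingCoeff_ne_zero.mpr hq
  have hcoeff := congrArg (fun r => coeff r (p.natDegree + q.natDegree)) hF
  simp only [coeff_C_mul, coeff_mul_degree_add_degree, leadingCoeff] at hcoeff
  have hlhs : (X * (derivative p * q - p * derivative q)).coeff (p.natDegree + q.natDegree)
      = p.coeff p.natDegree * q.coeff q.natDegree * ((p.natDegree : ℂ) - (q.natDegree : ℂ)) := by
    rcases Nat.eq_zero_or_pos (p.natDegree + q.natDegree) with h0 | hpos
    · obtain ⟨hm0, hn0⟩ := Nat.add_eq_zero.mp h0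
      rw [h0, hm0, hn0]
      simp [mul_coeff_zero]
    · obtain ⟨k, hk⟩ := Nat.exists_eq_add_of_le hpos
      have hk' : p.natDegree + q.natDegree = k + 1 := by omega
      rw [hk', coeff_X_mul, coeff_sub]
      have h1 : (derivative p * q).coeff k
          = p.coeff p.natDegree * (p.natDegree : ℂ) * q.coeff q.natDegree := by
        rcases Nat.eq_zero_or_pos p.natDegree with hm0 | hm1
        · rw [derivative_of_natDegree_zero hm0, hm0]
          simp
        · have hkeq : k = (p.natDegree - 1) + q.natDegree := by omega
          rw [hkeq, coeff_mul_add_eq_of_natDegree_le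
            ((natDegree_derivative_le p).trans (by omega)) le_rfl,
            coeff_derivative]
          have hmm : p.natDegree - 1 + 1 = p.natDegree := by omega
          have hcc : ((p.natDegree - 1 : ℕ) : ℂ) + 1 = (p.natDegree : ℂ) := by
            push_cast [Nat.cast_sub hm1]
            ring
          rw [hmm, hcc]
      have h2 : (p * derivative q).coeff k
          = p.coeff p.natDegree * ((q.natDegree : ℂ) * q.coeff q.natDegree) := by
        rcases Nat.eq_zero_or_pos q.natDegree with hn0 | hn1
        · rw [derivative_of_natDegree_zero hn0, hn0]
          simp
        · have hkeq : k = p.natDegree + (q.natDegree - 1) := by omega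
          rw [hkeq, coeff_mul_add_eq_of_natDegree_le le_rfl
            ((natDegree_derivative_le q).trans (by omega)),
            coeff_derivative]
          have hnn : q.natDegree - 1 + 1 = q.natDegree := by omega
          have hcc : ((q.natDegree - 1 : ℕ) : ℂ) + 1 = (q.natDegree : ℂ) := by
            push_cast [Nat.cast_sub hn1]
            ring
          rw [hnn, hcc]; ring
      rw [h1, h2]; ring
  rw [hlhs] at hcoeff
  have hab := mul_ne_zero ha hb
  have hμeq : μ = (p.natDegree : ℂ) - (q.natDegree : ℂ) :=
    (mul_left_cancel₀ hab (by linear_combination hcoeff)).symm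
  exact hμ ((p.natDegree : ℤ) - q.natDegree) (by push_cast; rw [hμeq])
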